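/- Let G be a group, ψ : G → ℤ a group homomorphism, and K = ker ψ. For any elements g₀, g₁, …, g_k of G with ψ(g_j) = 1 for every j, the 'closed' product of commutators ⁅g₀,g₁⁆·⁅g₁,g₂⁆·⋯·⁅g_{k−1},g_k⁆·⁅g_k,g₀⁆ lies in the commutator subgroup ⁅K,K⁆ of K. -/

import Mathlib

open scoped commutatorElement

/-- Cocycle identity: for `a b c` of length one, `⁅a,c⁆⁻¹ ⁅a,b⁆ ⁅b,c⁆` is a conjugate of
the commutator `⁅a c⁻¹, b c⁻¹⁆` of two kernel elements, hence lies in `⁅K, K⁆`. -/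
lemma cocycle_aux {G : Type*} [Group G] (ψ : G →* Multiplicative ℤ) (a b c : G)
    (ha : ψ a = Multiplicative.ofAdd 1) (hb : ψ b = Multiplicative.ofAdd 1)
    (hc : ψ c = Multiplicative.ofAdd 1) :
    ⁅a, c⁆⁻¹ * ⁅a, b⁆ * ⁅b, c⁆ ∈ ⁅ψ.ker, ψ.ker⁆ := by
  have hu : a * c⁻¹ ∈ ψ.ker := by simp [MonoidHom.mem_ker, ha, hc]
  have hw : b * c⁻¹ ∈ ψ.ker := by simp [MonoidHom.mem_ker, hb, hc]
  have key : ⁅a, c⁆⁻¹ * ⁅a, b⁆ * ⁅b, c⁆ = c * ⁅a * c⁻¹, b * c⁻¹⁆ * c⁻¹ := by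
    simp only [commutatorElement_def]; group
  rw [key]
  exact Subgroup.Normal.conj_mem inferInstance _
    (Subgroup.commutator_mem_commutator hu hw) c

/-- Let `G` be a group, `ψ : G → ℤ` a group homomorphism (here `ℤ` is viewed
multiplicatively as `Multiplicative ℤ`), and `K = ker ψ`. For any elements
`g 0, g 1, …, g k` of `G` with `ψ (g j) = 1` for every `j ≤ k`, the "closed" product of
commutators `⁅g 0, g 1⁆ ⁅g 1, g 2⁆ ⋯ ⁅g (k-1), g k⁆ ⁅g k, g 0⁆` lies in the commutator
subgroup `⁅K, K⁆`. -/
theorem closed_commutator_product_mem_commutator_ker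
    {G : Type*} [Group G] (ψ : G →* Multiplicative ℤ)
    (k : ℕ) (g : ℕ → G)
    (hg : ∀ j ≤ k, ψ (g j) = Multiplicative.ofAdd 1) :
    ((List.range k).map fun j => ⁅g j, g (j + 1)⁆).prod * ⁅g k, g 0⁆ ∈
      ⁅ψ.ker, ψ.ker⁆ := by
  induction k with
  | zero => simpa using one_mem _
  | succ k ih =>
    have hstep :
        ((List.range (k + 1)).map fun j => ⁅g j, g (j + 1)⁆).prod * ⁅g (k + 1), g 0⁆ =
          (((List.range k).map fun j => ⁅g j, g (j + 1)⁆).prod * ⁅g k, g 0⁆) *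
            (⁅g k, g 0⁆⁻¹ * ⁅g k, g (k + 1)⁆ * ⁅g (k + 1), g 0⁆) := by
      rw [List.range_succ, List.map_append, List.prod_append, List.map_singleton,
        List.prod_singleton]
      group
    rw [hstep]
    exact mul_mem (ih fun j hj => hg j (hj.trans (Nat.le_succ k)))
      (cocycle_aux ψ _ _ _ (hg k (Nat.le_succ k)) (hg (k + 1) le_rfl) (hg 0 (Nat.zero_le _)))
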